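/- Absolute convergence of the (A,N) orbital integral: For every continuous compactly supported function f : GL₂(ℂ) → ℂ and all x, c ∈ ℂ ∖ {0}, the function (a, y) ↦ f(s(a) z(c) n(x) w₀ n(y)) is absolutely integrable on (ℂ ∖ {0}) × ℂ with respect to d×a dA(y); in particular the orbital integral M(x, c, f) = ∫_{ℂ∖{0}} ∫_ℂ f(s(a) z(c) n(x) w₀ n(y)) dA(y) d×a is well defined. -/

import Mathlib

open MeasureTheory Filter Topology Complex
open scoped ENNReal


/-- The multiplicative Haar measure `d×a = dA(a)/|a|²` on `ℂ ∖ {0}`. -/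
noncomputable def mulHaar : Measure ℂ :=
  volume.withDensity fun a => ENNReal.ofReal ((‖a‖ ^ 2)⁻¹)

/-- `n(x) = [[1, x], [0, 1]]`. -/
def nMat (x : ℂ) : Matrix (Fin 2) (Fin 2) ℂ := !![1, x; 0, 1]

/-- `z(c) = [[c, 0], [0, c]]`. -/
def zMat (c : ℂ) : Matrix (Fin 2) (Fin 2) ℂ := !![c, 0; 0, c]

/-- `s(a) = [[a, 0], [0, 1/a]]`. -/
noncomputable def sMat (a : ℂ) : Matrix (Fin 2) (Fin 2) ℂ := !![a, 0; 0, a⁻¹]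

/-- `w₀ = [[0, 1], [1, 0]]`. -/
def w0Mat : Matrix (Fin 2) (Fin 2) ℂ := !![0, 1; 1, 0]



lemma matProd (a y x c : ℂ) : sMat a * zMat c * nMat x * w0Mat * nMat y =
    !![a*c*x, a*c*x*y + a*c; a⁻¹*c, a⁻¹*c*y] := by
  simp [sMat, zMat, nMat, w0Mat, Matrix.mul_fin_two]

lemma contH (x c : ℂ) : Continuous (fun q : ℂ × ℂ × ℂ =>
    (!![q.1*c*x, q.1*c*x*q.2.1 + q.1*c; q.2.2*c, q.2.2*c*q.2.1] : Matrix (Fin 2) (Fin 2) ℂ)) := by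
  apply continuous_matrix
  intro i j
  fin_cases i <;> fin_cases j <;> simp <;> fun_prop

lemma contF (f : Matrix (Fin 2) (Fin 2) ℂ → ℂ) (hf : Continuous f) (x c : ℂ) :
    ContinuousOn (fun p : ℂ × ℂ => f (sMat p.1 * zMat c * nMat x * w0Mat * nMat p.2))
      (({(0 : ℂ)}ᶜ : Set ℂ) ×ˢ (Set.univ : Set ℂ)) := by
  have h1 : ContinuousOn (fun p : ℂ × ℂ => (p.1, p.2, p.1⁻¹))
      (({(0 : ℂ)}ᶜ : Set ℂ) ×ˢ (Set.univ : Set ℂ)) := by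
    apply ContinuousOn.prodMk continuousOn_fst
    apply ContinuousOn.prodMk continuousOn_snd
    exact ContinuousOn.inv₀ continuousOn_fst (fun p hp => hp.1)
  have h2 := (hf.comp (contH x c)).comp_continuousOn h1
  have heq : (fun p : ℂ × ℂ => f (sMat p.1 * zMat c * nMat x * w0Mat * nMat p.2)) =
      (f ∘ fun q : ℂ × ℂ × ℂ =>
        (!![q.1*c*x, q.1*c*x*q.2.1 + q.1*c; q.2.2*c, q.2.2*c*q.2.1] : Matrix (Fin 2) (Fin 2) ℂ)) ∘
        (fun p : ℂ × ℂ => (p.1, p.2, p.1⁻¹)) := by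
    funext p
    simp only [Function.comp_apply, matProd]
  rw [heq]
  exact h2

lemma entryBound (f : Matrix (Fin 2) (Fin 2) ℂ → ℂ) (hcs : HasCompactSupport f) :
    ∃ R : ℝ, 1 ≤ R ∧ ∀ g ∈ tsupport f, ∀ i j, ‖g i j‖ ≤ R := by
  have hKc : IsCompact (tsupport f) := hcs
  have hcont : ∀ (i j : Fin 2), Continuous fun g : Matrix (Fin 2) (Fin 2) ℂ =>
      ‖g i j‖ := fun i j =>
    continuous_norm.comp ((continuous_apply j).comp (continuous_apply i))
  have hΦcont : Continuous fun g : Matrix (Fin 2) (Fin 2) ℂ =>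
      ‖g 0 0‖ + ‖g 0 1‖ + ‖g 1 0‖ + ‖g 1 1‖ :=
    (((hcont 0 0).add (hcont 0 1)).add (hcont 1 0)).add (hcont 1 1)
  obtain ⟨R₀, hR₀⟩ := (hKc.image hΦcont).bddAbove
  refine ⟨max R₀ 1, le_max_right _ _, fun g hg i j => ?_⟩
  have hΦ : ‖g 0 0‖ + ‖g 0 1‖ + ‖g 1 0‖ + ‖g 1 1‖ ≤ R₀ :=
    hR₀ ⟨g, hg, rfl⟩
  have h00 := norm_nonneg (g 0 0)
  have h01 := norm_nonneg (g 0 1)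
  have h10 := norm_nonneg (g 1 0)
  have h11 := norm_nonneg (g 1 1)
  have : ‖g i j‖ ≤ R₀ := by
    fin_cases i <;> fin_cases j <;> simp only [Fin.zero_eta, Fin.mk_one, Fin.isValue] <;> linarith
  exact this.trans (le_max_left _ _)

lemma finMeas (ε M₁ M₂ : ℝ) (hε : 0 < ε) :
    (mulHaar.prod volume) (({a : ℂ | ε ≤ ‖a‖ ∧ ‖a‖ ≤ M₁}) ×ˢ Metric.closedBall (0:ℂ) M₂) < ⊤ := by
  have hA : MeasurableSet {a : ℂ | ε ≤ ‖a‖ ∧ ‖a‖ ≤ M₁} := by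
    have : {a : ℂ | ε ≤ ‖a‖ ∧ ‖a‖ ≤ M₁} = (fun a : ℂ => ‖a‖) ⁻¹' (Set.Icc ε M₁) := rfl
    rw [this]; exact (continuous_norm.measurable) measurableSet_Icc
  rw [Measure.prod_prod]
  apply ENNReal.mul_lt_top
  · rw [mulHaar, withDensity_apply _ hA]
    calc ∫⁻ a in {a : ℂ | ε ≤ ‖a‖ ∧ ‖a‖ ≤ M₁}, ENNReal.ofReal ((‖a‖ ^ 2)⁻¹) ∂volume
        ≤ ∫⁻ _ in {a : ℂ | ε ≤ ‖a‖ ∧ ‖a‖ ≤ M₁}, ENNReal.ofReal ((ε ^ 2)⁻¹) ∂volume := by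
          apply setLIntegral_mono measurable_const
          intro a ha
          apply ENNReal.ofReal_le_ofReal
          apply inv_anti₀ (by positivity)
          exact pow_le_pow_left₀ hε.le ha.1 2
      _ = ENNReal.ofReal ((ε ^ 2)⁻¹) * volume {a : ℂ | ε ≤ ‖a‖ ∧ ‖a‖ ≤ M₁} := by
          rw [setLIntegral_const]
      _ < ⊤ := by
          apply ENNReal.mul_lt_top ENNReal.ofReal_lt_top
          have hsub : {a : ℂ | ε ≤ ‖a‖ ∧ ‖a‖ ≤ M₁} ⊆ Metric.closedBall 0 M₁ := by
            intro a ha; simpa [Metric.mem_closedBall, Complex.dist_eq] using ha.2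
          exact (measure_mono hsub).trans_lt (isCompact_closedBall _ _).measure_lt_top
  · exact (isCompact_closedBall _ _).measure_lt_top

-- support location lemma
lemma suppLoc (f : Matrix (Fin 2) (Fin 2) ℂ → ℂ) (x c : ℂ) (hx : x ≠ 0) (hc : c ≠ 0)
    (R : ℝ) (hR : 1 ≤ R)
    (hent : ∀ g ∈ tsupport f, ∀ i j, ‖g i j‖ ≤ R)
    (a y : ℂ) (ha : a ≠ 0)
    (hmemK : sMat a * zMat c * nMat x * w0Mat * nMat y ∈ tsupport f) :
    (a, y) ∈ ({a : ℂ | ‖c‖ / R ≤ ‖a‖ ∧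
        ‖a‖ ≤ R / (‖c‖ * ‖x‖)}) ×ˢ
      Metric.closedBall (0:ℂ) (R ^ 2 / (‖c‖ ^ 2 * ‖x‖)) := by
  have hRpos : (0:ℝ) < R := lt_of_lt_of_le one_pos hR
  have hcpos : 0 < ‖c‖ := by simpa using hc
  have hxpos : 0 < ‖x‖ := by simpa using hx
  have hapos : 0 < ‖a‖ := by simpa using ha
  have hb := hent _ hmemK
  rw [matProd] at hb
  have h00 : ‖a‖ * ‖c‖ * ‖x‖ ≤ R := by
    simpa [map_mul] using hb 0 0
  have h10 : (‖a‖)⁻¹ * ‖c‖ ≤ R := by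
    simpa [map_mul, map_inv₀] using hb 1 0
  have h11 : (‖a‖)⁻¹ * ‖c‖ * ‖y‖ ≤ R := by
    simpa [map_mul, map_inv₀, mul_assoc] using hb 1 1
  have haM : ‖a‖ ≤ R / (‖c‖ * ‖x‖) := by
    rw [le_div_iff₀ (by positivity)]
    nlinarith
  refine ⟨⟨?_, haM⟩, ?_⟩
  · show ‖c‖ / R ≤ ‖a‖
    rw [div_le_iff₀ hRpos]
    calc ‖c‖ = (‖a‖)⁻¹ * ‖c‖ * ‖a‖ := by field_simp
      _ ≤ R * ‖a‖ := mul_le_mul_of_nonneg_right h10 hapos.le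
      _ = ‖a‖ * R := by ring
  · show y ∈ Metric.closedBall (0:ℂ) _
    simp only [Metric.mem_closedBall, Complex.dist_eq, sub_zero]
    have hy : ‖y‖ ≤ R * ‖a‖ / ‖c‖ := by
      rw [le_div_iff₀ hcpos]
      calc ‖y‖ * ‖c‖
          = (‖a‖)⁻¹ * ‖c‖ * ‖y‖ * ‖a‖ := by
            field_simp
        _ ≤ R * ‖a‖ := mul_le_mul_of_nonneg_right h11 hapos.le
    calc ‖y‖ ≤ R * ‖a‖ / ‖c‖ := hy
      _ ≤ R * (R / (‖c‖ * ‖x‖)) / ‖c‖ := by gcongr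
      _ = R ^ 2 / (‖c‖ ^ 2 * ‖x‖) := by field_simp


/-- **Absolute convergence of the `(A,N)` orbital integral.** For continuous compactly
supported `f : GL₂(ℂ) → ℂ` and `x, c ≠ 0`, the function `(a, y) ↦ f(s(a) z(c) n(x) w₀ n(y))`
is absolutely integrable on `(ℂ ∖ {0}) × ℂ` with respect to `d×a dA(y)`. -/
theorem AN_orbital_integral_convergence (f : Matrix (Fin 2) (Fin 2) ℂ → ℂ)
    (hf : Continuous f) (hcs : HasCompactSupport f) (hGL : tsupport f ⊆ {g | g.det ≠ 0})
    (x c : ℂ) (hx : x ≠ 0) (hc : c ≠ 0) :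
    IntegrableOn (fun p : ℂ × ℂ => f (sMat p.1 * zMat c * nMat x * w0Mat * nMat p.2))
      ({(0 : ℂ)}ᶜ ×ˢ (Set.univ : Set ℂ)) (mulHaar.prod volume) := by
  obtain ⟨C, hC⟩ := hcs.exists_bound_of_continuous hf
  have hC0 : 0 ≤ C := le_trans (norm_nonneg _) (hC 0)
  obtain ⟨R, hR1, hent⟩ := entryBound f hcs
  have hRpos : (0:ℝ) < R := lt_of_lt_of_le one_pos hR1
  have hcpos : 0 < ‖c‖ := by simpa using hc
  set ε : ℝ := ‖c‖ / R with hεdef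
  set M₁ : ℝ := R / (‖c‖ * ‖x‖) with hM₁def
  set M₂ : ℝ := R ^ 2 / (‖c‖ ^ 2 * ‖x‖) with hM₂def
  have hεpos : 0 < ε := by positivity
  set S : Set (ℂ × ℂ) :=
    ({a : ℂ | ε ≤ ‖a‖ ∧ ‖a‖ ≤ M₁}) ×ˢ Metric.closedBall (0:ℂ) M₂ with hSdef
  have hSmeas : MeasurableSet S := by
    apply MeasurableSet.prod
    · have : {a : ℂ | ε ≤ ‖a‖ ∧ ‖a‖ ≤ M₁} = (fun a : ℂ => ‖a‖) ⁻¹' (Set.Icc ε M₁) := rfl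
      rw [this]; exact (continuous_norm.measurable) measurableSet_Icc
    · exact measurableSet_closedBall
  have hSfin : (mulHaar.prod volume) S < ⊤ := finMeas ε M₁ M₂ hεpos
  have hUmeas : MeasurableSet (({(0 : ℂ)}ᶜ : Set ℂ) ×ˢ (Set.univ : Set ℂ)) :=
    (measurableSet_singleton 0).compl.prod MeasurableSet.univ
  have hmeasF := (contF f hf x c).aestronglyMeasurable hUmeas
    (μ := mulHaar.prod volume)
  have hgint : Integrable (S.indicator fun _ => C)
      ((mulHaar.prod volume).restrict (({(0 : ℂ)}ᶜ : Set ℂ) ×ˢ (Set.univ : Set ℂ))) := by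
    apply Integrable.restrict
    rw [integrable_indicator_iff hSmeas]
    exact integrableOn_const hSfin.ne
  refine Integrable.mono' hgint hmeasF ?_
  rw [ae_restrict_iff' hUmeas]
  apply ae_of_all
  rintro ⟨a, y⟩ hp
  have ha : a ≠ 0 := hp.1
  by_cases hmem : (a, y) ∈ S
  · rw [Set.indicator_of_mem hmem]
    exact hC _
  · have hz : f (sMat a * zMat c * nMat x * w0Mat * nMat y) = 0 := by
      apply image_eq_zero_of_notMem_tsupport
      intro hmemK
      exact hmem (suppLoc f x c hx hc R hR1 hent a y ha hmemK)
    simp only [hz, norm_zero]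
    exact Set.indicator_apply_nonneg (fun _ => hC0)
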